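/- Let G be an edge-colored complete graph with a vertex v such that no properly colored quadrangle contains v and G has no monochromatic triangle. Then for any four distinct vertices x, y, z, w in G − v with col(v,{x,y}) ∩ col(v,{z,w}) = ∅, either col(xy) ∈ col(v,{x,y}) or col(zw) ∈ col(v,{z,w}). -/

import Mathlib

/-- An edge-colored graph (with total symmetric coloring `col`) contains a
monochromatic triangle. -/
def HasMonoTriangle {V : Type*} (col : V → V → ℕ) : Prop :=
  ∃ x y z : V, x ≠ y ∧ y ≠ z ∧ x ≠ z ∧ col x y = col y z ∧ col x y = col x z

/-- `c : ZMod ℓ → V` is a properly colored cycle of length `ℓ` in the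
edge-colored complete graph with coloring `col`. -/
def IsPCCycle {V : Type*} {ℓ : ℕ} (col : V → V → ℕ) (c : ZMod ℓ → V) : Prop :=
  Function.Injective c ∧
    ∀ i : ZMod ℓ, col (c i) (c (i + 1)) ≠ col (c (i + 1)) (c (i + 2))

/-- There is a properly colored cycle of length `ℓ` through `v`. -/
def PCThrough {V : Type*} (col : V → V → ℕ) (ℓ : ℕ) (v : V) : Prop :=
  ∃ c : ZMod ℓ → V, IsPCCycle col c ∧ ∃ i, c i = v

/-- `S` is a degenerate set of the edge-colored complete graph `col`. -/
def DegenSet {V : Type*} (col : V → V → ℕ) (S : Set V) : Prop :=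
  S.Nonempty ∧ ∃ f : V → ℕ,
    (∀ u ∈ S, ∀ v ∈ S, u ≠ v → col u v = f u ∨ col u v = f v) ∧
    (∀ u ∈ S, ∀ v, v ∉ S → col u v = f u)

lemma quad_mid {V : Type*} (col : V → V → ℕ) (v a b c : V)
    (hq : ¬ PCThrough col 4 v)
    (hva : a ≠ v) (hvb : b ≠ v) (hvc : c ≠ v) (hab : a ≠ b) (hac : a ≠ c) (hbc : b ≠ c)
    (h1 : col v a ≠ col a b) (h4 : col c v ≠ col v a) :
    col a b = col b c ∨ col b c = col c v := by
  by_contra h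
  push_neg at h
  obtain ⟨h2, h3⟩ := h
  apply hq
  refine ⟨fun i => ![v, a, b, c] i, ⟨?_, ?_⟩, 0, rfl⟩
  · intro i j hij
    fin_cases i <;> fin_cases j <;>
      simp_all [Matrix.cons_val_zero, Matrix.cons_val_one] <;> rfl
  · intro i
    fin_cases i
    · exact h1
    · exact h2
    · exact h3
    · exact h4

/-- Claim: if no PC quadrangle passes through $v$ and there is no
monochromatic triangle, then for distinct $x,y,z,w ≠ v$ with disjoint color
sets towards $v$, either $col(xy)$ is a color of $v$ towards $\{x,y\}$ or
$col(zw)$ is a color of $v$ towards $\{z,w\}$. -/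
theorem quad_free_color_claim
    {V : Type*} (col : V → V → ℕ)
    (hsym : ∀ u v, col u v = col v u)
    (hmono : ¬ HasMonoTriangle col)
    (v : V) (hnoquad : ¬ PCThrough col 4 v)
    (x y z w : V)
    (hxy : x ≠ y) (hxz : x ≠ z) (hxw : x ≠ w) (hyz : y ≠ z) (hyw : y ≠ w)
    (hzw : z ≠ w) (hvx : x ≠ v) (hvy : y ≠ v) (hvz : z ≠ v) (hvw : w ≠ v)
    (hdisj1 : col v x ≠ col v z) (hdisj2 : col v x ≠ col v w)
    (hdisj3 : col v y ≠ col v z) (hdisj4 : col v y ≠ col v w) :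
    (col x y = col v x ∨ col x y = col v y) ∨
    (col z w = col v z ∨ col z w = col v w) := by
  by_contra hcon
  push_neg at hcon
  obtain ⟨⟨hpa, hpb⟩, hqc, hqd⟩ := hcon
  -- cycle v,y,x,z : gives col x y = col x z ∨ col x z = col v z
  have D3 := quad_mid col v y x z hnoquad hvy hvx hvz (Ne.symm hxy) hyz hxz
    (fun h => hpb (hsym y x ▸ h).symm) (fun h => hdisj3 ((hsym z v ▸ h).symm))
  rw [hsym y x, hsym z v] at D3
  -- cycle v,w,z,x : gives col z w = col x z ∨ col x z = col v x
  have D7 := quad_mid col v w z x hnoquad hvw hvz hvx (Ne.symm hzw) (Ne.symm hxw) (Ne.symm hxz)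
    (fun h => hqd ((hsym w z ▸ h).symm)) (fun h => hdisj2 (hsym x v ▸ h))
  rw [hsym w z, hsym z x, hsym x v] at D7
  -- cycle v,y,x,w : gives col x y = col x w ∨ col x w = col v w
  have D4 := quad_mid col v y x w hnoquad hvy hvx hvw (Ne.symm hxy) hyw hxw
    (fun h => hpb (hsym y x ▸ h).symm) (fun h => hdisj4 ((hsym w v ▸ h).symm))
  rw [hsym y x, hsym w v] at D4
  -- cycle v,z,w,x : gives col z w = col x w ∨ col x w = col v x
  have D5 := quad_mid col v z w x hnoquad hvz hvw hvx hzw (Ne.symm hxz) (Ne.symm hxw)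
    (fun h => hqc h.symm) (fun h => hdisj1 (hsym x v ▸ h))
  rw [hsym w x, hsym x v] at D5
  have hkey : col x z = col x y ∧ col z w = col x y := by
    rcases D3 with h1 | h1 <;> rcases D7 with h2 | h2
    · exact ⟨h1.symm, h2.trans h1.symm⟩
    · exact absurd (h1.trans h2) hpa
    · exact absurd (h2.trans h1) hqc
    · exact absurd (h2.symm.trans h1) hdisj1
  have hxw' : col x w = col x y := by
    rcases D4 with h1 | h1 <;> rcases D5 with h2 | h2
    · exact h1.symm
    · exact h1.symm
    · exact absurd (h2.trans h1) hqd
    · exact absurd (h2.symm.trans h1) hdisj2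
  exact hmono ⟨x, z, w, hxz, hzw, hxw, hkey.1.trans hkey.2.symm, hkey.1.trans hxw'.symm⟩
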